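/- Let C assign a rational number C(m; d) to each pair of a finite tuple m of elements of (ℤ^{≥0})³∖{0} and a nonzero d ∈ (ℤ^{≥0})³. Then there is at most one F, assigning a rational number F(m; d) to each pair of a (possibly empty) finite tuple m of elements of (ℤ^{≥0})³∖{0} and a nonzero d ∈ (ℤ^{≥0})³, such that: F is invariant under every simultaneous permutation of the three coordinates of d and of all entries mᵢ; F satisfies the divisor relation F((e_s)⌢m; d) = d_s·F(m; d) for s = 1,2,3; F(m; d) = 0 whenever some mᵢ has a coordinate ≥ 2; F(m; d) = 0 whenever k_d(m) is even; F(m; d) = 0 whenever k_d(m) < 0; F((); e_s) = 1 for s = 1,2,3; F((); (1,1,1)) = −1; F satisfies recursion (A) with complex input C at all admissible (r,d,m); and, for every r ∈ {1,2,3} and every d ∈ (ℤ^{≥0})³∖{0, e_r}, (|d|−1−2d_r)·F((); d) = Σ_{d′,d″ ∈ (ℤ^{≥0})³, |d′| ≥ 2, |d″| ≥ 2, d′+d″=d+e_r} d′_r ( d″_r C(|d|−1, |d′|−1) − d′_r C(|d|−1, |d′|) ) F((); d′) F((); d″). That is, any two such F agree everywhere. -/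

import Mathlib

open Finset

/-- Binomial coefficient `C(n,k)` as a rational number, with the convention that
`C(n,k) = 0` whenever `k < 0` or `k > n`. -/
def binom (n k : ℤ) : ℚ :=
  if 0 ≤ k ∧ k ≤ n then (n.toNat.choose k.toNat : ℚ) else 0

/-- Elements of `(ℤ^{≥0})³`. -/
abbrev V3 := Fin 3 → ℕ

/-- `|d| = d₁ + d₂ + d₃`. -/
def nrm (v : V3) : ℕ := ∑ i, v i

/-- The vector `𝟏 = (1,1,1)`. -/
def oneV : V3 := fun _ => 1

/-- All entries of the tuple `m` lie in `(ℤ^{≥0})³ ∖ {0}`. -/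
def posV (m : List V3) : Prop := ∀ v ∈ m, v ≠ 0

/-- For `d ∈ (ℤ^{≥0})³` and a tuple `m = (m₁,…,m_l)` of elements of `(ℤ^{≥0})³`,
the number `k_d(m) = |d| + l − (|m₁| + ⋯ + |m_l|)`. -/
def kd3 (d : V3) (m : List V3) : ℤ :=
  (nrm d : ℤ) + m.length - ((m.map nrm).sum : ℤ)

/-- The subtuple of a tuple `m` indexed (in increasing order) by a set `S`
of positions. -/
def subt {α : Type*} (m : List α) (S : Finset (Fin m.length)) : List α :=
  (S.sort (· ≤ ·)).map m.get

/-- Vectors `d'` with `d'' + 2d' = d` for some `d''`, `d' ≠ 0`, `d'' ≠ 0`. -/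
def halfVec (d : V3) : Finset V3 :=
  (Fintype.piFinset fun i => Finset.range (d i + 1)).filter
    fun d' => (∀ i, 2 * d' i ≤ d i) ∧ d' ≠ 0 ∧ (fun i => d i - 2 * d' i) ≠ (0 : V3)

/-- Vectors `d'` with `d' + d'' = d` for some `d''`, `d' ≠ 0`, `d'' ≠ 0`. -/
def splitVec (d : V3) : Finset V3 :=
  (Fintype.piFinset fun i => Finset.range (d i + 1)).filter
    fun d' => d' ≠ 0 ∧ (fun i => d i - d' i) ≠ (0 : V3)

/-- The nonzero vectors `i ∈ (ℤ^{≥0})³` with `𝟏 − i` nonzero. -/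
def unitsV : Finset V3 :=
  (Fintype.piFinset fun _ => Finset.range 2).filter
    fun i => i ≠ 0 ∧ i ≠ oneV

/-- The term `T₀ = −2^{l−2} d_r C(m⌢(𝟏); d/2)` if all three coordinates of `d`
are even and `k_d(m) = 2`, and `0` otherwise; the power `2^{l−2}` is taken
in `ℚ`. -/
def TA (C : List V3 → V3 → ℚ) (d : V3) (r : Fin 3) (m : List V3) : ℚ :=
  if (∀ i, Even (d i)) ∧ kd3 d m = 2 then
    -((2 : ℚ) ^ ((m.length : ℤ) - 2)) * (d r : ℚ) * C (m ++ [oneV]) (fun i => d i / 2)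
  else 0

/-- The WDVV-type recursion (A) for the real invariants of `((ℙ¹)³, φ₃)` at
`(r, d, m)` with `m = x :: t`: the sums over `(I,J) ∈ P(l)` are encoded by the
subsets `S` of the positions of `t` placed in `I` (so `m_I = x :: t_S`,
`m_J = t_{Sᶜ}` and `|I| = |S| + 1`). -/
def RecA (C F : List V3 → V3 → ℚ) (r : Fin 3) (d : V3) (x : V3) (t : List V3) : Prop :=
  F ((x + Pi.single r 1) :: t) d =
    TA C d r (x :: t)
    - ∑ d' ∈ halfVec d, (d' r : ℚ) *
        ∑ S : Finset (Fin t.length), (2 : ℚ) ^ S.card *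
          ∑ i ∈ unitsV,
            C ((x :: subt t S) ++ [i]) d'
              * F ((fun s => 1 - i s) :: subt t Sᶜ) (fun s => d s - 2 * d' s)
    + ∑ d' ∈ splitVec d,
        ∑ S : Finset (Fin t.length),
          (((d r - d' r : ℕ) : ℚ) * binom (kd3 d (x :: t) - 2) (kd3 d' (x :: subt t S) - 1)
            - (d' r : ℚ) * binom (kd3 d (x :: t) - 2) (kd3 d' (x :: subt t S)))
          * F (x :: subt t S) d' * F (subt t Sᶜ) (fun s => d s - d' s)

/-- The full set of conditions on the real genus 0 invariants `F(m; d)` of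
`((ℙ¹)³, φ₃)`: invariance under simultaneous coordinate permutations, the
divisor relation, the vanishing statements, the base values, the recursion (A),
and the quadratic relation for the purely real point-counting invariants. -/
def GoodProd (C F : List V3 → V3 → ℚ) : Prop :=
  (∀ σ : Equiv.Perm (Fin 3), ∀ d : V3, d ≠ 0 → ∀ m : List V3, posV m →
      F (m.map fun v => v ∘ σ) (d ∘ σ) = F m d)
    ∧ (∀ s : Fin 3, ∀ d : V3, d ≠ 0 → ∀ m : List V3, posV m →
        F (Pi.single s 1 :: m) d = (d s : ℚ) * F m d)
    ∧ (∀ d : V3, d ≠ 0 → ∀ m : List V3, posV m →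
        (∃ v ∈ m, ∃ i : Fin 3, 2 ≤ v i) → F m d = 0)
    ∧ (∀ d : V3, d ≠ 0 → ∀ m : List V3, posV m → kd3 d m % 2 = 0 → F m d = 0)
    ∧ (∀ d : V3, d ≠ 0 → ∀ m : List V3, posV m → kd3 d m < 0 → F m d = 0)
    ∧ (∀ s : Fin 3, F [] (Pi.single s 1) = 1)
    ∧ F [] oneV = -1
    ∧ (∀ (r : Fin 3) (d : V3) (x : V3) (t : List V3), d ≠ 0 → posV (x :: t) →
        2 ≤ kd3 d (x :: t) → RecA C F r d x t)
    ∧ (∀ (r : Fin 3) (d : V3), d ≠ 0 → d ≠ Pi.single r 1 →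
        ((nrm d : ℚ) - 1 - 2 * (d r : ℚ)) * F [] d =
          ∑ d' ∈ (Fintype.piFinset fun i => Finset.range ((d + Pi.single r 1 : V3) i + 1)).filter
              (fun d' => 2 ≤ nrm d' ∧ 2 ≤ nrm (fun i => (d + Pi.single r 1 : V3) i - d' i)),
            (d' r : ℚ)
              * ((((d + Pi.single r 1 : V3) r - d' r : ℕ) : ℚ)
                    * binom ((nrm d : ℤ) - 1) ((nrm d' : ℤ) - 1)
                  - (d' r : ℚ) * binom ((nrm d : ℤ) - 1) (nrm d' : ℤ))
              * F [] d' * F [] (fun i => (d + Pi.single r 1 : V3) i - d' i))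


section AuxUniq

lemma nrm_pos' {d : V3} (h : d ≠ 0) : 1 ≤ nrm d := by
  obtain ⟨i, hi⟩ := Function.ne_iff.mp h
  simp only [Pi.zero_apply] at hi
  calc 1 ≤ d i := Nat.one_le_iff_ne_zero.mpr hi
  _ ≤ nrm d := Finset.single_le_sum (f := d) (fun _ _ => Nat.zero_le _) (mem_univ i)

lemma ne_zero_of_nrm {d : V3} (h : 1 ≤ nrm d) : d ≠ 0 := by
  rintro rfl; simp [nrm] at h

lemma nrm_add_single (x : V3) (r : Fin 3) : nrm (x + Pi.single r 1) = nrm x + 1 := by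
  simp [nrm, Pi.add_apply, Finset.sum_add_distrib, Finset.sum_pi_single]

lemma nrm_split {d d' : V3} (hle : ∀ i, d' i ≤ d i) :
    nrm d' + nrm (fun i => d i - d' i) = nrm d := by
  simp only [nrm, ← Finset.sum_add_distrib]
  exact Finset.sum_congr rfl fun i _ => by have := hle i; omega

lemma nrm_half {d d' : V3} (hle : ∀ i, 2 * d' i ≤ d i) :
    2 * nrm d' + nrm (fun i => d i - 2 * d' i) = nrm d := by
  simp only [nrm, Finset.mul_sum, ← Finset.sum_add_distrib]
  exact Finset.sum_congr rfl fun i _ => by have := hle i; omega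

lemma eq_single_of_nrm_one {v : V3} (hle : ∀ i, v i < 2) (h : nrm v = 1) :
    ∃ s, v = Pi.single s 1 := by
  have h012 : v 0 + v 1 + v 2 = 1 := by simpa [nrm, Fin.sum_univ_three] using h
  have hex : ∃ s : Fin 3, v s = 1 := by
    by_contra hc; push_neg at hc
    have := hc 0; have := hc 1; have := hc 2; omega
  obtain ⟨s, hs⟩ := hex
  refine ⟨s, funext fun i => ?_⟩
  have h0 := hle 0; have h1 := hle 1; have h2 := hle 2
  fin_cases s <;> fin_cases i <;> simp_all [Pi.single_apply] <;> omega

lemma mem_of_mem_subt {m : List V3} {S : Finset (Fin m.length)} {u : V3}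
    (h : u ∈ subt m S) : u ∈ m := by
  simp only [subt, List.mem_map] at h
  obtain ⟨j, _, rfl⟩ := h
  exact m.get_mem _

lemma posV_nil : posV [] := by intro u hu; exact absurd hu List.not_mem_nil

lemma kd3_cons (d v : V3) (t : List V3) : kd3 d (v :: t) = kd3 d t + 1 - nrm v := by
  simp only [kd3, List.map_cons, List.sum_cons, List.length_cons]
  push_cast; ring

lemma one_sub_ne {i : V3} (hi : i ∈ unitsV) : (fun s => 1 - i s) ≠ (0 : V3) := by
  simp only [unitsV, Finset.mem_filter, Fintype.mem_piFinset, Finset.mem_range] at hi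
  obtain ⟨hlt, -, hone⟩ := hi
  obtain ⟨s, hs⟩ := Function.ne_iff.mp hone
  refine Function.ne_iff.mpr ⟨s, ?_⟩
  have h1 := hlt s
  simp only [oneV] at hs
  simp only [Pi.zero_apply]
  omega

end AuxUniq

/-- There is at most one function `F` on pairs of a tuple of nonzero vectors and
a nonzero degree satisfying all the conditions of `GoodProd`. -/
theorem stmt_18 (C F F' : List V3 → V3 → ℚ)
    (hF : GoodProd C F) (hF' : GoodProd C F') :
    ∀ d : V3, d ≠ 0 → ∀ m : List V3, posV m → F m d = F' m d := by
  obtain ⟨sym, div, big, evn, neg, unit, one1, recA, quad⟩ := hF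
  obtain ⟨sym', div', big', evn', neg', unit', one1', recA', quad'⟩ := hF'
  suffices H : ∀ n : ℕ, ∀ d : V3, nrm d ≤ n → d ≠ 0 → ∀ m : List V3, posV m → F m d = F' m d by
    intro d hd m hm; exact H (nrm d) d le_rfl hd m hm
  intro n
  induction n with
  | zero =>
    intro d hdn hd0 m hm
    exact absurd hdn (by have := nrm_pos' hd0; omega)
  | succ n IH =>
    intro d hdn hd0 m
    induction m with
    | nil =>
      intro _
      by_cases hs : ∃ s : Fin 3, d = Pi.single s 1
      · obtain ⟨s, rfl⟩ := hs; rw [unit, unit']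
      by_cases ho : d = oneV
      · subst ho; rw [one1, one1']
      have hex : ∃ r : Fin 3, 2 * d r + 1 ≠ nrm d := by
        by_contra hcon; push_neg at hcon
        apply ho; funext i
        have h0 := hcon 0; have h1 := hcon 1; have h2 := hcon 2; have hi := hcon i
        have hn : nrm d = d 0 + d 1 + d 2 := by simp [nrm, Fin.sum_univ_three]
        show d i = 1
        omega
      obtain ⟨r, hr⟩ := hex
      have hdr : d ≠ Pi.single r 1 := fun h => hs ⟨r, h⟩
      have hq := quad r d hd0 hdr
      have hq' := quad' r d hd0 hdr
      have hco : ((nrm d : ℚ) - 1 - 2 * (d r : ℚ)) ≠ 0 := by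
        intro h
        apply hr
        have hcast : ((2 * d r + 1 : ℕ) : ℚ) = ((nrm d : ℕ) : ℚ) := by push_cast; linarith
        exact_mod_cast hcast
      refine mul_left_cancel₀ hco (hq.trans (Eq.trans ?_ hq'.symm))
      refine Finset.sum_congr rfl fun d' hd' => ?_
      simp only [Finset.mem_filter, Fintype.mem_piFinset, Finset.mem_range] at hd'
      obtain ⟨hle, h2, h2'⟩ := hd'
      have hkey : nrm d' + nrm (fun i => (d + Pi.single r 1 : V3) i - d' i)
          = nrm (d + Pi.single r 1) :=
        nrm_split (fun i => by have := hle i; omega)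
      have hns : nrm (d + Pi.single r 1) = nrm d + 1 := nrm_add_single d r
      rw [IH d' (by omega) (ne_zero_of_nrm (by omega)) [] posV_nil,
        IH _ (by omega) (ne_zero_of_nrm (by omega)) [] posV_nil]
    | cons v t iht =>
      intro hm
      have hv : v ≠ 0 := hm v (List.mem_cons_self)
      have hpt : posV t := fun u hu => hm u (List.mem_cons_of_mem _ hu)
      by_cases hbigc : ∃ i : Fin 3, 2 ≤ v i
      · rw [big d hd0 (v :: t) hm ⟨v, List.mem_cons_self, hbigc⟩,
          big' d hd0 (v :: t) hm ⟨v, List.mem_cons_self, hbigc⟩]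
      push_neg at hbigc
      by_cases h1 : nrm v = 1
      · obtain ⟨s, rfl⟩ := eq_single_of_nrm_one hbigc h1
        rw [div s d hd0 t hpt, div' s d hd0 t hpt, iht hpt]
      -- head has norm ≥ 2 and all coordinates ≤ 1
      obtain ⟨r0, hr0⟩ := Function.ne_iff.mp hv
      simp only [Pi.zero_apply] at hr0
      have hr1 : v r0 = 1 := by have := hbigc r0; omega
      set x : V3 := Function.update v r0 0 with hxdef
      have hvx : v = x + Pi.single r0 1 := by
        funext i
        by_cases hi : i = r0
        · subst hi
          simp [hxdef, Function.update_self, Pi.single_eq_same, hr1]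
        · simp [hxdef, Function.update_of_ne hi, Pi.single_eq_of_ne hi]
      have hx0 : x ≠ 0 := by
        have hj : ∃ j, j ≠ r0 ∧ v j ≠ 0 := by
          by_contra hcon; push_neg at hcon
          apply h1
          have hup : nrm v ≤ 1 := by
            calc nrm v = ∑ j, v j := rfl
            _ ≤ ∑ j, (if j = r0 then 1 else 0) := Finset.sum_le_sum fun j _ => by
                  by_cases hjr : j = r0
                  · subst hjr; simp [hr1]
                  · simp [hjr, hcon j hjr]
            _ = 1 := by simp
          have := nrm_pos' hv
          omega
        obtain ⟨j, hjr, hjv⟩ := hj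
        refine Function.ne_iff.mpr ⟨j, ?_⟩
        simp only [Pi.zero_apply, hxdef, Function.update_of_ne hjr]
        exact hjv
      have hnv : nrm v = nrm x + 1 := by rw [hvx, nrm_add_single]
      have hkx : kd3 d (x :: t) = kd3 d (v :: t) + 1 := by
        rw [kd3_cons, kd3_cons, hnv]; push_cast; ring
      by_cases hkneg : kd3 d (v :: t) < 0
      · rw [neg d hd0 (v :: t) hm hkneg, neg' d hd0 (v :: t) hm hkneg]
      by_cases hkev : kd3 d (v :: t) % 2 = 0
      · rw [evn d hd0 (v :: t) hm hkev, evn' d hd0 (v :: t) hm hkev]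
      have hk2 : 2 ≤ kd3 d (x :: t) := by omega
      have hpxt : posV (x :: t) := by
        intro u hu
        rcases List.mem_cons.mp hu with h | h
        · subst h; exact hx0
        · exact hpt u h
      have HA := recA r0 d x t hd0 hpxt hk2
      have HA' := recA' r0 d x t hd0 hpxt hk2
      unfold RecA at HA HA'
      rw [hvx, HA, HA']
      congr 1
      · congr 1
        refine Finset.sum_congr rfl fun d' hd' => ?_
        simp only [halfVec, Finset.mem_filter, Fintype.mem_piFinset, Finset.mem_range] at hd'
        obtain ⟨-, hhle, hd'0, hd''0⟩ := hd'
        have hkey : 2 * nrm d' + nrm (fun i => d i - 2 * d' i) = nrm d := nrm_half hhle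
        have hp1 : 1 ≤ nrm d' := nrm_pos' hd'0
        congr 1
        refine Finset.sum_congr rfl fun S _ => ?_
        congr 1
        refine Finset.sum_congr rfl fun i hi => ?_
        congr 1
        refine IH _ (by omega) hd''0 _ ?_
        intro u hu
        rcases List.mem_cons.mp hu with h | h
        · subst h; exact one_sub_ne hi
        · exact hpt u (mem_of_mem_subt h)
      · refine Finset.sum_congr rfl fun d' hd' => ?_
        simp only [splitVec, Finset.mem_filter, Fintype.mem_piFinset, Finset.mem_range] at hd'
        obtain ⟨hsle, hd'0, hd''0⟩ := hd'
        have hkey : nrm d' + nrm (fun i => d i - d' i) = nrm d :=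
          nrm_split (fun i => by have := hsle i; omega)
        have hp1 : 1 ≤ nrm d' := nrm_pos' hd'0
        have hp2 : 1 ≤ nrm (fun i => d i - d' i) := nrm_pos' hd''0
        refine Finset.sum_congr rfl fun S _ => ?_
        rw [IH d' (by omega) hd'0 (x :: subt t S) (by
            intro u hu
            rcases List.mem_cons.mp hu with h | h
            · subst h; exact hx0
            · exact hpt u (mem_of_mem_subt h)),
          IH _ (by omega) hd''0 (subt t Sᶜ)
            (fun u hu => hpt u (mem_of_mem_subt hu))]
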